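/- Let n ≥ 2 and κ ∈ ℝ. Then, as v → 0⁺, the model isoperimetric profile satisfies I_κ(v) = n^{(n−1)/n}·ω_{n−1}^{1/n}·v^{(n−1)/n} − ((n−1)κ/(2(n+2)))·(n^{(n+1)/n}/ω_{n−1}^{1/n})·v^{(n+1)/n} + O(v^{(n+3)/n}); that is, the difference between I_κ(v) and the two displayed terms is O(v^{(n+3)/n}) as v → 0⁺. -/

import Mathlib

open Real MeasureTheory Filter Asymptotics

/-- Inverse hyperbolic tangent. -/
noncomputable def artanh (y : ℝ) : ℝ := Real.log ((1 + y) / (1 - y)) / 2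

/-- The generalized sine function `sin_κ`. -/
noncomputable def sinK (κ t : ℝ) : ℝ :=
  if 0 < κ then Real.sin (Real.sqrt κ * t) / Real.sqrt κ
  else if κ < 0 then Real.sinh (Real.sqrt (-κ) * t) / Real.sqrt (-κ)
  else t

/-- The generalized cosine function `cos_κ = sin_κ'`. -/
noncomputable def cosK (κ t : ℝ) : ℝ :=
  if 0 < κ then Real.cos (Real.sqrt κ * t)
  else if κ < 0 then Real.cosh (Real.sqrt (-κ) * t)
  else 1

/-- The generalized tangent function `tan_κ`. -/
noncomputable def tanK (κ t : ℝ) : ℝ := sinK κ t / cosK κ t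

/-- The inverse function `arctan_κ` of `tan_κ`. -/
noncomputable def arctanK (κ x : ℝ) : ℝ :=
  if 0 < κ then Real.arctan (Real.sqrt κ * x) / Real.sqrt κ
  else if κ < 0 then _root_.artanh (Real.sqrt (-κ) * x) / Real.sqrt (-κ)
  else x

/-- `ω_{n-1}`, the (n-1)-volume of the unit sphere of ℝⁿ, i.e. `n` times the
volume of the unit ball. -/
noncomputable def omegaS (n : ℕ) : ℝ :=
  n * (volume (Metric.ball (0 : EuclideanSpace ℝ (Fin n)) 1)).toReal

/-- `A_κ(t)`: the volume of a geodesic sphere of radius `t` in the model space. -/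
noncomputable def AK (n : ℕ) (κ t : ℝ) : ℝ := omegaS n * sinK κ t ^ (n - 1)

/-- `V_κ(t)`: the volume of a geodesic ball of radius `t` in the model space. -/
noncomputable def VK (n : ℕ) (κ t : ℝ) : ℝ := omegaS n * ∫ s in (0:ℝ)..t, sinK κ s ^ (n - 1)

/-- The natural domain of `V_κ`: `[0, π/√κ)` when `κ > 0` and `[0, ∞)` otherwise. -/
noncomputable def domK (κ : ℝ) : Set ℝ :=
  if 0 < κ then Set.Ico 0 (Real.pi / Real.sqrt κ) else Set.Ici 0

/-- The range of `V_κ` (on its natural domain). -/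
noncomputable def rangeVK (n : ℕ) (κ : ℝ) : Set ℝ := VK n κ '' domK κ

/-- The inverse of `V_κ` on its natural domain. -/
noncomputable def VKinv (n : ℕ) (κ v : ℝ) : ℝ := sInf {t : ℝ | t ∈ domK κ ∧ VK n κ t = v}

/-- The isoperimetric profile `I_κ = A_κ ∘ V_κ⁻¹` of the model space. -/
noncomputable def IK (n : ℕ) (κ v : ℝ) : ℝ := AK n κ (VKinv n κ v)
namespace IsoPf

lemma omegaS_pos {n : ℕ} (hn : 1 ≤ n) : 0 < omegaS n := by
  unfold omegaS
  have h1 : (0:ℝ) < n := by exact_mod_cast hn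
  refine mul_pos h1 ?_
  have hfin : volume (Metric.ball (0 : EuclideanSpace ℝ (Fin n)) 1) < ⊤ :=
    measure_ball_lt_top
  have hpos : 0 < volume (Metric.ball (0 : EuclideanSpace ℝ (Fin n)) 1) :=
    Metric.measure_ball_pos _ _ one_pos
  exact ENNReal.toReal_pos hpos.ne' hfin.ne

lemma continuous_sinK (κ : ℝ) : Continuous (sinK κ) := by
  unfold sinK
  split_ifs with h1 h2
  · exact (Real.continuous_sin.comp (continuous_const.mul continuous_id)).div_const _
  · exact (Real.continuous_sinh.comp (continuous_const.mul continuous_id)).div_const _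
  · exact continuous_id

lemma sinK_pos {κ t : ℝ} (ht : 0 < t) (ht' : 0 < κ → t < Real.pi / Real.sqrt κ) :
    0 < sinK κ t := by
  unfold sinK
  split_ifs with h1 h2
  · have ha : 0 < Real.sqrt κ := Real.sqrt_pos.mpr h1
    refine div_pos ?_ ha
    refine Real.sin_pos_of_pos_of_lt_pi (mul_pos ha ht) ?_
    have h2 := ht' h1
    calc Real.sqrt κ * t < Real.sqrt κ * (Real.pi / Real.sqrt κ) := by
          exact mul_lt_mul_of_pos_left h2 ha
      _ = Real.pi := by field_simp
  · have hb : 0 < Real.sqrt (-κ) := Real.sqrt_pos.mpr (by linarith)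
    exact div_pos (Real.sinh_pos_iff.mpr (mul_pos hb ht)) hb
  · exact ht

lemma abs_le_of_mem_uIcc {x y : ℝ} (h : y ∈ Set.uIcc 0 x) : |y| ≤ |x| := by
  rcases le_total 0 x with hx | hx
  · rw [Set.uIcc_of_le hx] at h
    rw [abs_of_nonneg h.1, abs_of_nonneg hx]; exact h.2
  · rw [Set.uIcc_of_ge hx] at h
    rw [abs_of_nonpos h.2, abs_of_nonpos hx]; linarith [h.1]

lemma cosh_taylor {x : ℝ} (hx : |x| ≤ 1) :
    |Real.cosh x - (1 + x ^ 2 / 2)| ≤ |x| ^ 4 * (5 / 96) := by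
  have h1 := Real.exp_bound hx (by norm_num : 0 < 4)
  have h2 := Real.exp_bound (x := -x) (by rwa [abs_neg]) (by norm_num : 0 < 4)
  have e1 : ∑ m ∈ Finset.range 4, x ^ m / m.factorial = 1 + x + x ^ 2 / 2 + x ^ 3 / 6 := by
    norm_num [Finset.sum_range_succ, Nat.factorial]
  have e2 : ∑ m ∈ Finset.range 4, (-x) ^ m / m.factorial = 1 - x + x ^ 2 / 2 - x ^ 3 / 6 := by
    norm_num [Finset.sum_range_succ, Nat.factorial]
    ring
  rw [e1] at h1; rw [e2, abs_neg] at h2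
  have hc : Real.cosh x - (1 + x ^ 2 / 2) =
      ((Real.exp x - (1 + x + x ^ 2 / 2 + x ^ 3 / 6)) +
       (Real.exp (-x) - (1 - x + x ^ 2 / 2 - x ^ 3 / 6))) / 2 := by
    rw [Real.cosh_eq]; ring
  rw [hc]
  norm_num [Nat.factorial] at h1 h2
  calc |((Real.exp x - (1 + x + x ^ 2 / 2 + x ^ 3 / 6)) +
       (Real.exp (-x) - (1 - x + x ^ 2 / 2 - x ^ 3 / 6))) / 2|
      ≤ (|Real.exp x - (1 + x + x ^ 2 / 2 + x ^ 3 / 6)| +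
         |Real.exp (-x) - (1 - x + x ^ 2 / 2 - x ^ 3 / 6)|) / 2 := by
        rw [abs_div]; simp only [abs_two]; gcongr; exact abs_add_le _ _
    _ ≤ (|x| ^ 4 * (5 / 96) + |x| ^ 4 * (5 / 96)) / 2 := by gcongr
    _ = |x| ^ 4 * (5 / 96) := by ring

lemma sinh_taylor {x : ℝ} (hx : |x| ≤ 1) : |Real.sinh x - (x + x ^ 3 / 6)| ≤ |x| ^ 5 := by
  have key : ∀ y ∈ Set.uIcc 0 x,
      HasDerivWithinAt (fun t => Real.sinh t - (t + t ^ 3 / 6))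
        (Real.cosh y - (1 + y ^ 2 / 2)) (Set.uIcc 0 x) y := by
    intro y _
    have h1 : HasDerivAt (fun t : ℝ => Real.sinh t - (t + t ^ 3 / 6))
        (Real.cosh y - (1 + 3 * y ^ 2 / 6)) y := by
      exact (Real.hasDerivAt_sinh y).sub
        ((hasDerivAt_id y).add ((hasDerivAt_pow 3 y).div_const 6))
    have : Real.cosh y - (1 + 3 * y ^ 2 / 6) = Real.cosh y - (1 + y ^ 2 / 2) := by ring
    rw [this] at h1
    exact h1.hasDerivWithinAt
  have bound : ∀ y ∈ Set.uIcc 0 x, ‖Real.cosh y - (1 + y ^ 2 / 2)‖ ≤ |x| ^ 4 := by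
    intro y hy
    have hyx : |y| ≤ |x| := abs_le_of_mem_uIcc hy
    have hy1 : |y| ≤ 1 := hyx.trans hx
    calc ‖Real.cosh y - (1 + y ^ 2 / 2)‖ ≤ |y| ^ 4 * (5 / 96) := cosh_taylor hy1
      _ ≤ |x| ^ 4 * 1 := by
          refine mul_le_mul (pow_le_pow_left₀ (abs_nonneg y) hyx 4) (by norm_num) (by norm_num)
            (by positivity)
      _ = |x| ^ 4 := by ring
  have := (convex_uIcc (0:ℝ) x).norm_image_sub_le_of_norm_hasDerivWithin_le key bound
    Set.left_mem_uIcc Set.right_mem_uIcc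
  simpa [pow_succ, abs_mul] using this

lemma sin_taylor {x : ℝ} (hx : |x| ≤ 1) : |Real.sin x - (x - x ^ 3 / 6)| ≤ |x| ^ 5 := by
  have key : ∀ y ∈ Set.uIcc 0 x,
      HasDerivWithinAt (fun t => Real.sin t - (t - t ^ 3 / 6))
        (Real.cos y - (1 - y ^ 2 / 2)) (Set.uIcc 0 x) y := by
    intro y _
    have h1 : HasDerivAt (fun t : ℝ => Real.sin t - (t - t ^ 3 / 6))
        (Real.cos y - (1 - 3 * y ^ 2 / 6)) y := by
      exact (Real.hasDerivAt_sin y).sub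
        ((hasDerivAt_id y).sub ((hasDerivAt_pow 3 y).div_const 6))
    have : Real.cos y - (1 - 3 * y ^ 2 / 6) = Real.cos y - (1 - y ^ 2 / 2) := by ring
    rw [this] at h1
    exact h1.hasDerivWithinAt
  have bound : ∀ y ∈ Set.uIcc 0 x, ‖Real.cos y - (1 - y ^ 2 / 2)‖ ≤ |x| ^ 4 := by
    intro y hy
    have hyx : |y| ≤ |x| := abs_le_of_mem_uIcc hy
    have hy1 : |y| ≤ 1 := hyx.trans hx
    calc ‖Real.cos y - (1 - y ^ 2 / 2)‖ ≤ |y| ^ 4 * (5 / 96) := Real.cos_bound hy1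
      _ ≤ |x| ^ 4 * 1 := by
          refine mul_le_mul (pow_le_pow_left₀ (abs_nonneg y) hyx 4) (by norm_num) (by norm_num)
            (by positivity)
      _ = |x| ^ 4 := by ring
  have := (convex_uIcc (0:ℝ) x).norm_image_sub_le_of_norm_hasDerivWithin_le key bound
    Set.left_mem_uIcc Set.right_mem_uIcc
  simpa [pow_succ, abs_mul] using this



lemma rpow_aux_deriv (α : ℝ) {w : ℝ} (hw : -(1/2) ≤ w) :
    HasDerivAt (fun u : ℝ => (1 + u) ^ α) (α * (1 + w) ^ (α - 1)) w := by
  have h0 : (1 + w) ≠ 0 := by norm_num; nlinarith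
  have h := (Real.hasDerivAt_rpow_const (x := 1 + w) (p := α) (Or.inl h0)).comp w
    ((hasDerivAt_id w).const_add 1)
  simpa [Function.comp_def] using h

/-- second order Taylor bound for `(1+u)^α` near `u = 0`. -/
lemma rpow_taylor (α : ℝ) : ∃ C : ℝ, 0 ≤ C ∧
    ∀ u : ℝ, |u| ≤ 1/2 → |(1 + u) ^ α - 1 - α * u| ≤ C * u ^ 2 := by
  -- bound for (1+w)^(α-2) on [-1/2,1/2]
  set M : ℝ := (1/2 : ℝ) ^ (α - 2) + (3/2 : ℝ) ^ (α - 2) with hM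
  have hMpos : 0 < M := by positivity
  have hMbd : ∀ w : ℝ, |w| ≤ 1/2 → (1 + w) ^ (α - 2) ≤ M := by
    intro w hw
    rw [abs_le] at hw
    rcases le_total 0 (α - 2) with hα | hα
    · have : (1 + w) ^ (α - 2) ≤ (3/2 : ℝ) ^ (α - 2) :=
        Real.rpow_le_rpow (by linarith) (by linarith) hα
      have h2 : (0:ℝ) ≤ (1/2 : ℝ) ^ (α - 2) := by positivity
      rw [hM]; linarith
    · have : (1 + w) ^ (α - 2) ≤ (1/2 : ℝ) ^ (α - 2) :=
        Real.rpow_le_rpow_of_nonpos (by norm_num) (by linarith) hα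
      have h2 : (0:ℝ) ≤ (3/2 : ℝ) ^ (α - 2) := by positivity
      rw [hM]; linarith
  -- step A : |(1+w)^(α-1) - 1| ≤ |α-1| * M * |w| on [-1/2,1/2]
  have stepA : ∀ w : ℝ, |w| ≤ 1/2 → |(1 + w) ^ (α - 1) - 1| ≤ |α - 1| * M * |w| := by
    intro w hw
    have hderiv : ∀ y ∈ Set.Icc (-(1/2) : ℝ) (1/2),
        HasDerivWithinAt (fun u : ℝ => (1 + u) ^ (α - 1)) ((α - 1) * (1 + y) ^ (α - 1 - 1))
          (Set.Icc (-(1/2) : ℝ) (1/2)) y := fun y hy =>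
      (rpow_aux_deriv (α - 1) hy.1).hasDerivWithinAt
    have hbd : ∀ y ∈ Set.Icc (-(1/2) : ℝ) (1/2),
        ‖(α - 1) * (1 + y) ^ (α - 1 - 1)‖ ≤ |α - 1| * M := by
      intro y hy
      rw [norm_mul, Real.norm_eq_abs, Real.norm_eq_abs]
      have h1 : 0 ≤ (1 + y) ^ (α - 1 - 1) := Real.rpow_nonneg (by linarith [hy.1]) _
      rw [abs_of_nonneg h1]
      have : α - 1 - 1 = α - 2 := by ring
      rw [this]
      exact mul_le_mul_of_nonneg_left (hMbd y (abs_le.mpr ⟨hy.1, hy.2⟩)) (abs_nonneg _)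
    have := (convex_Icc (-(1/2) : ℝ) (1/2)).norm_image_sub_le_of_norm_hasDerivWithin_le
      hderiv hbd (by norm_num : (0:ℝ) ∈ Set.Icc (-(1/2):ℝ) (1/2))
      (abs_le.mp hw |> fun h => ⟨h.1, h.2⟩ : w ∈ Set.Icc (-(1/2):ℝ) (1/2))
    simpa using this
  -- step B
  refine ⟨|α| * (|α - 1| * M), by positivity, fun u hu => ?_⟩
  have hderiv : ∀ y ∈ Set.uIcc 0 u,
      HasDerivWithinAt (fun w : ℝ => (1 + w) ^ α - 1 - α * w)
        (α * ((1 + y) ^ (α - 1) - 1)) (Set.uIcc 0 u) y := by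
    intro y hy
    have hyu : |y| ≤ |u| := abs_le_of_mem_uIcc hy
    have hy2 : -(1/2) ≤ y := by
      have := (abs_le.mp (hyu.trans hu)).1; linarith
    have h := ((rpow_aux_deriv α hy2).sub_const 1).sub
      ((hasDerivAt_id y).const_mul α)
    have he : α * (1 + y) ^ (α - 1) - α * 1 = α * ((1 + y) ^ (α - 1) - 1) := by ring
    rw [he] at h
    exact h.hasDerivWithinAt
  have hbd : ∀ y ∈ Set.uIcc 0 u,
      ‖α * ((1 + y) ^ (α - 1) - 1)‖ ≤ |α| * (|α - 1| * M) * |u| := by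
    intro y hy
    have hyu : |y| ≤ |u| := abs_le_of_mem_uIcc hy
    rw [norm_mul, Real.norm_eq_abs, Real.norm_eq_abs]
    have h1 : |(1 + y) ^ (α - 1) - 1| ≤ |α - 1| * M * |y| := stepA y (hyu.trans hu)
    calc |α| * |(1 + y) ^ (α - 1) - 1| ≤ |α| * (|α - 1| * M * |y|) :=
          mul_le_mul_of_nonneg_left h1 (abs_nonneg _)
      _ ≤ |α| * (|α - 1| * M * |u|) := by
          refine mul_le_mul_of_nonneg_left ?_ (abs_nonneg _)
          exact mul_le_mul_of_nonneg_left hyu (by positivity)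
      _ = |α| * (|α - 1| * M) * |u| := by ring
  have := (convex_uIcc (0:ℝ) u).norm_image_sub_le_of_norm_hasDerivWithin_le
    hderiv hbd Set.left_mem_uIcc Set.right_mem_uIcc
  have h0 : ((1:ℝ) + 0) ^ α - 1 - α * 0 = 0 := by simp
  rw [h0] at this
  simp only [sub_zero, Real.norm_eq_abs] at this
  calc |(1 + u) ^ α - 1 - α * u| ≤ |α| * (|α - 1| * M) * |u| * |u| := by
        simpa [Real.norm_eq_abs] using this
    _ = |α| * (|α - 1| * M) * u ^ 2 := by rw [mul_assoc, abs_mul_abs_self, ← pow_two]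


lemma sinK_taylor (κ : ℝ) : ∃ C δ : ℝ, 0 ≤ C ∧ 0 < δ ∧ δ ≤ 1 ∧
    ∀ t : ℝ, 0 ≤ t → t ≤ δ → |sinK κ t - (t - κ * t ^ 3 / 6)| ≤ C * t ^ 5 := by
  rcases lt_trichotomy κ 0 with hκ | hκ | hκ
  · set b := Real.sqrt (-κ) with hb
    have hbpos : 0 < b := Real.sqrt_pos.mpr (by linarith)
    have hκb : κ = -(b ^ 2) := by
      rw [hb, Real.sq_sqrt (by linarith : (0:ℝ) ≤ -κ)]; ring
    refine ⟨b ^ 4, min 1 (1 / b), by positivity, by positivity, min_le_left _ _, fun t ht htδ => ?_⟩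
    have hbt : |b * t| ≤ 1 := by
      rw [abs_of_nonneg (by positivity)]
      calc b * t ≤ b * (1 / b) := by
            refine mul_le_mul_of_nonneg_left (htδ.trans (min_le_right _ _)) hbpos.le
        _ = 1 := by field_simp
    have hs := sinh_taylor hbt
    have key : sinK κ t - (t - κ * t ^ 3 / 6) =
        (Real.sinh (b * t) - (b * t + (b * t) ^ 3 / 6)) / b := by
      unfold sinK
      rw [if_neg (by linarith), if_pos (by linarith : κ < 0), ← hb, hκb]
      field_simp
      ring
    rw [key, abs_div, abs_of_pos hbpos, div_le_iff₀ hbpos]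
    calc |Real.sinh (b * t) - (b * t + (b * t) ^ 3 / 6)| ≤ |b * t| ^ 5 := hs
      _ = b ^ 5 * t ^ 5 := by
          rw [abs_of_nonneg (by positivity : (0:ℝ) ≤ b * t)]; ring
      _ = b ^ 4 * t ^ 5 * b := by ring
  · refine ⟨0, 1, le_refl _, one_pos, le_refl _, fun t ht htδ => ?_⟩
    subst hκ
    unfold sinK
    rw [if_neg (lt_irrefl 0), if_neg (lt_irrefl 0)]
    simp
  · set a := Real.sqrt κ with ha
    have hapos : 0 < a := Real.sqrt_pos.mpr hκ
    have hκa : κ = a ^ 2 := by rw [ha, Real.sq_sqrt hκ.le]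
    refine ⟨a ^ 4, min 1 (1 / a), by positivity, by positivity, min_le_left _ _, fun t ht htδ => ?_⟩
    have hat : |a * t| ≤ 1 := by
      rw [abs_of_nonneg (by positivity)]
      calc a * t ≤ a * (1 / a) := by
            refine mul_le_mul_of_nonneg_left (htδ.trans (min_le_right _ _)) hapos.le
        _ = 1 := by field_simp
    have hs := sin_taylor hat
    have key : sinK κ t - (t - κ * t ^ 3 / 6) =
        (Real.sin (a * t) - (a * t - (a * t) ^ 3 / 6)) / a := by
      unfold sinK
      rw [if_pos hκ, ← ha, hκa]
      field_simp
    rw [key, abs_div, abs_of_pos hapos, div_le_iff₀ hapos]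
    calc |Real.sin (a * t) - (a * t - (a * t) ^ 3 / 6)| ≤ |a * t| ^ 5 := hs
      _ = a ^ 5 * t ^ 5 := by
          rw [abs_of_nonneg (by positivity : (0:ℝ) ≤ a * t)]; ring
      _ = a ^ 4 * t ^ 5 * a := by ring

lemma mem_domK {κ t : ℝ} : t ∈ domK κ ↔ 0 ≤ t ∧ (0 < κ → t < Real.pi / Real.sqrt κ) := by
  unfold domK
  split_ifs with h
  · simp only [Set.mem_Ico]
    exact ⟨fun ⟨a, b⟩ => ⟨a, fun _ => b⟩, fun ⟨a, b⟩ => ⟨a, b h⟩⟩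
  · simp only [Set.mem_Ici]
    exact ⟨fun a => ⟨a, fun hk => absurd hk h⟩, fun ⟨a, _⟩ => a⟩

lemma VK_zero (n : ℕ) (κ : ℝ) : VK n κ 0 = 0 := by
  unfold VK; simp

lemma intervalIntegrable_sinK_pow (κ : ℝ) (m : ℕ) (a b : ℝ) :
    IntervalIntegrable (fun s => sinK κ s ^ m) volume a b :=
  ((continuous_sinK κ).pow m).intervalIntegrable a b

lemma continuous_VK (n : ℕ) (κ : ℝ) : Continuous (VK n κ) := by
  unfold VK
  exact continuous_const.mul
    (intervalIntegral.continuous_primitive (fun a b => intervalIntegrable_sinK_pow κ _ a b) 0)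

lemma strictMonoOn_VK {n : ℕ} (hn : 1 ≤ n) (κ : ℝ) : StrictMonoOn (VK n κ) (domK κ) := by
  intro t1 h1 t2 h2 h12
  unfold VK
  have hω : 0 < omegaS n := omegaS_pos hn
  refine mul_lt_mul_of_pos_left ?_ hω
  have split : ∫ s in (0:ℝ)..t2, sinK κ s ^ (n - 1) =
      (∫ s in (0:ℝ)..t1, sinK κ s ^ (n - 1)) + ∫ s in t1..t2, sinK κ s ^ (n - 1) :=
    (intervalIntegral.integral_add_adjacent_intervals
      (intervalIntegrable_sinK_pow κ _ 0 t1) (intervalIntegrable_sinK_pow κ _ t1 t2)).symm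
  rw [split]
  have pos : 0 < ∫ s in t1..t2, sinK κ s ^ (n - 1) := by
    refine intervalIntegral.intervalIntegral_pos_of_pos_on
      (intervalIntegrable_sinK_pow κ _ t1 t2) (fun x hx => ?_) h12
    have h10 : 0 ≤ t1 := (mem_domK.mp h1).1
    have hx0 : 0 < x := lt_of_le_of_lt h10 hx.1
    have hxπ : 0 < κ → x < Real.pi / Real.sqrt κ := fun hκ =>
      lt_trans hx.2 ((mem_domK.mp h2).2 hκ)
    have := sinK_pos hx0 hxπ
    positivity
  linarith

lemma VKinv_eq {n : ℕ} (hn : 1 ≤ n) {κ t v : ℝ} (ht : t ∈ domK κ) (hV : VK n κ t = v) :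
    VKinv n κ v = t := by
  unfold VKinv
  have hset : {s : ℝ | s ∈ domK κ ∧ VK n κ s = v} = {t} := by
    ext s
    simp only [Set.mem_setOf_eq, Set.mem_singleton_iff]
    constructor
    · rintro ⟨hs, hVs⟩
      exact (strictMonoOn_VK hn κ).injOn hs ht (by rw [hVs, hV])
    · rintro rfl; exact ⟨ht, hV⟩
  rw [hset, csInf_singleton]

set_option maxHeartbeats 1000000 in
lemma core_estimate (n : ℕ) (hn : 2 ≤ n) (κ : ℝ) : ∃ C δ : ℝ, 0 ≤ C ∧ 0 < δ ∧ δ ≤ 1 ∧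
    (0 < κ → δ < Real.pi / Real.sqrt κ) ∧
    ∀ t : ℝ, 0 < t → t ≤ δ →
      |AK n κ t -
        ((n : ℝ) ^ (((n : ℝ) - 1) / (n : ℝ)) * omegaS n ^ ((1 : ℝ) / (n : ℝ)) *
            VK n κ t ^ (((n : ℝ) - 1) / (n : ℝ)) -
          (((n : ℝ) - 1) * κ / (2 * ((n : ℝ) + 2))) *
            ((n : ℝ) ^ (((n : ℝ) + 1) / (n : ℝ)) / omegaS n ^ ((1 : ℝ) / (n : ℝ))) *
            VK n κ t ^ (((n : ℝ) + 1) / (n : ℝ)))| ≤ C * VK n κ t ^ (((n : ℝ) + 3) / (n : ℝ)) := by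
  -- notation
  set ω := omegaS n with hωdef
  have hω : 0 < ω := omegaS_pos (by omega)
  set m : ℕ := n - 1 with hmdef
  have hmn : m + 1 = n := by omega
  have hmr : (m : ℝ) = (n : ℝ) - 1 := by
    have h := hmn
    have : ((m + 1 : ℕ) : ℝ) = (n : ℝ) := by rw [h]
    push_cast at this
    linarith
  have hnr : (0 : ℝ) < n := by positivity
  have hn0 : (n : ℝ) ≠ 0 := ne_of_gt hnr
  have hn2 : ((n : ℝ) + 2) ≠ 0 := by positivity
  set α₁ : ℝ := ((n : ℝ) - 1) / n with hα₁
  set α₂ : ℝ := ((n : ℝ) + 1) / n with hα₂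
  set γ : ℝ := ((n : ℝ) + 3) / n with hγ
  set β : ℝ := (n : ℝ) * ((n : ℝ) - 1) / (6 * ((n : ℝ) + 2)) with hβ
  set q : ℝ := ((n : ℝ) - 1) * κ / (2 * ((n : ℝ) + 2)) with hq
  obtain ⟨C₁, δ₁, hC₁, hδ₁, hδ₁1, hT⟩ := sinK_taylor κ
  obtain ⟨Cm, hCm, hTm⟩ := rpow_taylor (m : ℝ)
  obtain ⟨C₂, hC₂, hT₂⟩ := rpow_taylor α₁
  obtain ⟨C₃, hC₃, hT₃⟩ := rpow_taylor α₂
  set c₂ : ℝ := |κ| / 6 + C₁ with hc₂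
  have hc₂0 : 0 ≤ c₂ := by positivity
  set K₂ : ℝ := Cm * c₂ ^ 2 + m * C₁ with hK₂
  have hK₂0 : 0 ≤ K₂ := by positivity
  set K₃ : ℝ := n * K₂ with hK₃
  have hK₃0 : 0 ≤ K₃ := by positivity
  have hβ0 : 0 ≤ β := by
    rw [hβ]
    have h1 : (0:ℝ) ≤ (n : ℝ) - 1 := by
      have : (1:ℝ) ≤ (n:ℝ) := by exact_mod_cast (by omega : 1 ≤ n)
      linarith
    positivity
  set c₃ : ℝ := |κ| * β + K₃ with hc₃
  have hc₃0 : 0 ≤ c₃ := by positivity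
  -- choice of δ
  set D : ℝ := max c₂ c₃ with hD
  have hD0 : 0 ≤ D := le_max_of_le_left hc₂0
  set δa : ℝ := 1 / (2 * (D + 1)) with hδa
  have hδa0 : 0 < δa := by positivity
  have hδa1 : δa ≤ 1 := by
    rw [hδa, div_le_one (by positivity)]
    linarith
  set δκ : ℝ := if 0 < κ then Real.pi / (2 * Real.sqrt κ) else 1 with hδκ
  have hδκ0 : 0 < δκ := by
    rw [hδκ]
    split_ifs with h
    · have := Real.sqrt_pos.mpr h
      positivity
    · norm_num
  set δ : ℝ := min δ₁ (min δa δκ) with hδ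
  have hδ0 : 0 < δ := lt_min hδ₁ (lt_min hδa0 hδκ0)
  have hδle1 : δ ≤ 1 := (min_le_left _ _).trans hδ₁1
  have hδleδa : δ ≤ δa := (min_le_right _ _).trans (min_le_left _ _)
  have hδπ : 0 < κ → δ < Real.pi / Real.sqrt κ := by
    intro hκ
    have h1 : δ ≤ δκ := (min_le_right _ _).trans (min_le_right _ _)
    have h2 : δκ = Real.pi / (2 * Real.sqrt κ) := by rw [hδκ, if_pos hκ]
    have hs : 0 < Real.sqrt κ := Real.sqrt_pos.mpr hκ
    have h3 : Real.pi / (2 * Real.sqrt κ) < Real.pi / Real.sqrt κ := by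
      apply div_lt_div_of_pos_left Real.pi_pos hs
      linarith
    linarith
  -- step 2: pointwise expansion of sinK ^ m
  have step2 : ∀ s : ℝ, 0 < s → s ≤ δ →
      |sinK κ s ^ m - (s ^ m - (m : ℝ) * κ / 6 * s ^ (m + 2))| ≤ K₂ * s ^ (m + 4) := by
    intro s hs hsδ
    have hs1 : s ≤ 1 := hsδ.trans hδle1
    have hsδ₁ : s ≤ δ₁ := hsδ.trans (min_le_left _ _)
    have hTs := hT s hs.le hsδ₁
    obtain ⟨e, hsinK⟩ : ∃ e : ℝ, sinK κ s = s * (1 + e) :=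
      ⟨sinK κ s / s - 1, by field_simp; ring⟩
    have he1 : |e + κ * s ^ 2 / 6| ≤ C₁ * s ^ 4 := by
      have heq : e + κ * s ^ 2 / 6 = (sinK κ s - (s - κ * s ^ 3 / 6)) / s := by
        rw [hsinK]; field_simp; ring
      rw [heq, abs_div, abs_of_pos hs, div_le_iff₀ hs]
      calc |sinK κ s - (s - κ * s ^ 3 / 6)| ≤ C₁ * s ^ 5 := hTs
        _ = C₁ * s ^ 4 * s := by ring
    have hs2le1 : s ^ 2 ≤ 1 := by
      calc s ^ 2 ≤ 1 ^ 2 := pow_le_pow_left₀ hs.le hs1 2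
        _ = 1 := one_pow 2
    have h3 : s ^ 4 ≤ s ^ 2 := by
      calc s ^ 4 = s ^ 2 * s ^ 2 := by ring
        _ ≤ 1 * s ^ 2 := mul_le_mul_of_nonneg_right hs2le1 (sq_nonneg s)
        _ = s ^ 2 := one_mul _
    have he2 : |e| ≤ c₂ * s ^ 2 := by
      have h1 : |e| ≤ |e + κ * s ^ 2 / 6| + |κ * s ^ 2 / 6| := by
        calc |e| = |(e + κ * s ^ 2 / 6) + (-(κ * s ^ 2 / 6))| := by ring_nf
          _ ≤ |e + κ * s ^ 2 / 6| + |(-(κ * s ^ 2 / 6))| := abs_add_le _ _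
          _ = |e + κ * s ^ 2 / 6| + |κ * s ^ 2 / 6| := by rw [abs_neg]
      have h2 : |κ * s ^ 2 / 6| = |κ| * s ^ 2 / 6 := by
        rw [abs_div, abs_mul, abs_of_nonneg (sq_nonneg s)]
        norm_num
      rw [hc₂]
      calc |e| ≤ C₁ * s ^ 4 + |κ| * s ^ 2 / 6 := by rw [h2] at h1; linarith [he1]
        _ ≤ C₁ * s ^ 2 + |κ| * s ^ 2 / 6 := by
            have := mul_le_mul_of_nonneg_left h3 hC₁
            linarith
        _ = (|κ| / 6 + C₁) * s ^ 2 := by ring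
    have hs2δa : s ^ 2 ≤ δa := by
      have h1 : s ≤ δa := hsδ.trans hδleδa
      calc s ^ 2 = s * s := sq s
        _ ≤ 1 * s := mul_le_mul_of_nonneg_right hs1 hs.le
        _ = s := one_mul s
        _ ≤ δa := h1
    have he3 : |e| ≤ 1 / 2 := by
      have h1 : c₂ ≤ D := le_max_left _ _
      have h2 : c₂ * s ^ 2 ≤ (D + 1) * δa := by
        refine mul_le_mul (by linarith) hs2δa (sq_nonneg s) (by linarith)
      have h4 : (D + 1) * δa = 1 / 2 := by
        rw [hδa]; field_simp
      linarith [he2]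
    have hpow := hTm e he3
    have hnn : (0:ℝ) ≤ 1 + e := by
      have h5 : -(1/2 : ℝ) ≤ e := (abs_le.mp he3).1
      linarith
    rw [Real.rpow_natCast] at hpow
    have heq2 : sinK κ s ^ m - (s ^ m - (m : ℝ) * κ / 6 * s ^ (m + 2)) =
        s ^ m * ((1 + e) ^ m - 1 - (m : ℝ) * e) + (m : ℝ) * s ^ m * (e + κ * s ^ 2 / 6) := by
      rw [hsinK, mul_pow]
      ring
    rw [heq2]
    have he2sq : e ^ 2 ≤ c₂ ^ 2 * s ^ 4 := by
      calc e ^ 2 = |e| ^ 2 := (sq_abs e).symm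
        _ ≤ (c₂ * s ^ 2) ^ 2 := pow_le_pow_left₀ (abs_nonneg e) he2 2
        _ = c₂ ^ 2 * s ^ 4 := by ring
    calc |s ^ m * ((1 + e) ^ m - 1 - (m : ℝ) * e) + (m : ℝ) * s ^ m * (e + κ * s ^ 2 / 6)|
        ≤ |s ^ m * ((1 + e) ^ m - 1 - (m : ℝ) * e)| + |(m : ℝ) * s ^ m * (e + κ * s ^ 2 / 6)| :=
          abs_add_le _ _
      _ ≤ s ^ m * (Cm * (c₂ ^ 2 * s ^ 4)) + (m : ℝ) * s ^ m * (C₁ * s ^ 4) := by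
          gcongr ?_ + ?_
          · rw [abs_mul, abs_of_nonneg (pow_nonneg hs.le m)]
            refine mul_le_mul_of_nonneg_left ?_ (pow_nonneg hs.le m)
            exact hpow.trans (mul_le_mul_of_nonneg_left he2sq hCm)
          · rw [abs_mul, abs_mul]
            rw [abs_of_nonneg (by positivity : (0:ℝ) ≤ (m:ℝ)), abs_of_nonneg (pow_nonneg hs.le m)]
            exact mul_le_mul_of_nonneg_left he1 (by positivity)
      _ = K₂ * s ^ (m + 4) := by
          rw [hK₂]
          ring
  -- final constant
  set K₄ : ℝ := (m : ℝ) * C₁ + |α₁| * K₃ + Cm * c₂ ^ 2 + C₂ * c₃ ^ 2 +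
      |q| * (|α₂| * c₃ + C₃ * c₃ ^ 2) with hK₄
  have hK₄0 : 0 ≤ K₄ := by positivity
  have hγ0 : (0:ℝ) ≤ γ := by rw [hγ]; positivity
  have hbase : (0:ℝ) < ω / (2 * (n:ℝ)) := by positivity
  have hbγ : (0:ℝ) < (ω / (2 * (n:ℝ))) ^ γ := Real.rpow_pos_of_pos hbase γ
  refine ⟨ω * K₄ / ((ω / (2 * (n:ℝ))) ^ γ), δ, ?_, hδ0, hδle1, hδπ, ?_⟩
  · positivity
  intro t ht htδ
  have htnn : (0:ℝ) ≤ t := ht.le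
  have ht1 : t ≤ 1 := htδ.trans hδle1
  have htn : (0:ℝ) < t ^ n := pow_pos ht n
  have ht2le1 : t ^ 2 ≤ 1 := by
    calc t ^ 2 ≤ 1 ^ 2 := pow_le_pow_left₀ htnn ht1 2
      _ = 1 := one_pow 2
  have ht4le2 : t ^ 4 ≤ t ^ 2 := by
    calc t ^ 4 = t ^ 2 * t ^ 2 := by ring
      _ ≤ 1 * t ^ 2 := mul_le_mul_of_nonneg_right ht2le1 (sq_nonneg t)
      _ = t ^ 2 := one_mul _
  have ht2δa : t ^ 2 ≤ δa := by
    have h1 : t ≤ δa := htδ.trans hδleδa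
    calc t ^ 2 = t * t := sq t
      _ ≤ 1 * t := mul_le_mul_of_nonneg_right ht1 htnn
      _ = t := one_mul t
      _ ≤ δa := h1
  -- step 3 : integral estimate for VK
  have hiV : VK n κ t = ω * ∫ s in (0:ℝ)..t, sinK κ s ^ m := by
    rw [hωdef, hmdef]; rfl
  have hgint : IntervalIntegrable (fun s : ℝ => s ^ m - (m:ℝ) * κ / 6 * s ^ (m + 2))
      volume 0 t :=
    ((continuous_pow m).sub (continuous_const.mul (continuous_pow (m + 2)))).intervalIntegrable _ _
  have hpoly : (∫ s in (0:ℝ)..t, (s ^ m - (m:ℝ) * κ / 6 * s ^ (m + 2)))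
      = t ^ n / n - (m:ℝ) * κ / (6 * ((n:ℝ) + 2)) * t ^ (n + 2) := by
    rw [intervalIntegral.integral_sub (f := fun s => s ^ m) (g := fun s => (m:ℝ) * κ / 6 * s ^ (m + 2)) ((continuous_pow m).intervalIntegrable _ _)
      ((continuous_const.mul (continuous_pow (m + 2))).intervalIntegrable _ _)]
    rw [intervalIntegral.integral_const_mul, integral_pow, integral_pow]
    rw [show m + 1 = n from hmn, show m + 2 + 1 = n + 2 from by omega]
    rw [zero_pow (by omega : n ≠ 0), zero_pow (by omega : n + 2 ≠ 0)]
    have d1 : ((m:ℝ) + 1) = (n:ℝ) := by rw [hmr]; ring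
    have d2 : ((m:ℝ) + 2 + 1) = (n:ℝ) + 2 := by rw [hmr]; ring
    push_cast
    rw [d1, d2]
    field_simp
    ring
  have hdiff : |(∫ s in (0:ℝ)..t, (sinK κ s ^ m - (s ^ m - (m:ℝ) * κ / 6 * s ^ (m + 2))))|
      ≤ K₂ * t ^ (m + 4) * |t - 0| := by
    rw [← Real.norm_eq_abs]
    refine intervalIntegral.norm_integral_le_of_norm_le_const ?_
    intro x hx
    rw [Set.uIoc_of_le htnn] at hx
    have hx0 : 0 < x := hx.1
    have hxt : x ≤ t := hx.2
    have h1 := step2 x hx0 (hxt.trans htδ)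
    rw [Real.norm_eq_abs]
    refine h1.trans ?_
    exact mul_le_mul_of_nonneg_left (pow_le_pow_left₀ hx0.le hxt _) hK₂0
  have hint : |VK n κ t - ω * (t ^ n / n - (m:ℝ) * κ / (6 * ((n:ℝ) + 2)) * t ^ (n + 2))|
      ≤ ω * K₂ * t ^ (n + 4) := by
    have hsplit : (∫ s in (0:ℝ)..t, (sinK κ s ^ m - (s ^ m - (m:ℝ) * κ / 6 * s ^ (m + 2))))
        = (∫ s in (0:ℝ)..t, sinK κ s ^ m)
          - ∫ s in (0:ℝ)..t, (s ^ m - (m:ℝ) * κ / 6 * s ^ (m + 2)) :=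
      intervalIntegral.integral_sub (intervalIntegrable_sinK_pow κ m 0 t) hgint
    have heq : VK n κ t - ω * (t ^ n / n - (m:ℝ) * κ / (6 * ((n:ℝ) + 2)) * t ^ (n + 2))
        = ω * ((∫ s in (0:ℝ)..t, sinK κ s ^ m)
          - ∫ s in (0:ℝ)..t, (s ^ m - (m:ℝ) * κ / 6 * s ^ (m + 2))) := by
      rw [hpoly, hiV]; ring
    rw [heq, ← hsplit, abs_mul, abs_of_pos hω]
    calc ω * |(∫ s in (0:ℝ)..t, (sinK κ s ^ m - (s ^ m - (m:ℝ) * κ / 6 * s ^ (m + 2))))|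
        ≤ ω * (K₂ * t ^ (m + 4) * |t - 0|) := mul_le_mul_of_nonneg_left hdiff hω.le
      _ = ω * K₂ * t ^ (n + 4) := by
          rw [sub_zero, abs_of_pos ht, show n + 4 = (m + 4) + 1 from by omega, pow_succ]
          ring
  -- step 4 : the normalized deviation u
  obtain ⟨u, huV⟩ : ∃ u : ℝ, VK n κ t = ω * t ^ n / n * (1 + u) :=
    ⟨(n:ℝ) * VK n κ t / (ω * t ^ n) - 1, by field_simp; ring⟩
  have hu1 : |u + β * κ * t ^ 2| ≤ K₃ * t ^ 4 := by
    have heq : u + β * κ * t ^ 2 = (n:ℝ) / (ω * t ^ n) *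
        (VK n κ t - ω * (t ^ n / n - (m:ℝ) * κ / (6 * ((n:ℝ) + 2)) * t ^ (n + 2))) := by
      rw [huV, hβ, hmr]
      field_simp
      ring
    rw [heq, abs_mul, abs_of_pos (by positivity : (0:ℝ) < (n:ℝ) / (ω * t ^ n))]
    have htp : t ^ (n + 4) = t ^ n * t ^ 4 := pow_add t n 4
    calc (n:ℝ) / (ω * t ^ n) * |VK n κ t - ω * (t ^ n / n -
          (m:ℝ) * κ / (6 * ((n:ℝ) + 2)) * t ^ (n + 2))|
        ≤ (n:ℝ) / (ω * t ^ n) * (ω * K₂ * t ^ (n + 4)) :=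
          mul_le_mul_of_nonneg_left hint (by positivity)
      _ = K₃ * t ^ 4 := by
          rw [htp, hK₃]
          field_simp
  have hu2 : |u| ≤ c₃ * t ^ 2 := by
    have h1 : |u| ≤ |u + β * κ * t ^ 2| + |β * κ * t ^ 2| := by
      calc |u| = |(u + β * κ * t ^ 2) + (-(β * κ * t ^ 2))| := by ring_nf
        _ ≤ |u + β * κ * t ^ 2| + |(-(β * κ * t ^ 2))| := abs_add_le _ _
        _ = |u + β * κ * t ^ 2| + |β * κ * t ^ 2| := by rw [abs_neg]
    have h2 : |β * κ * t ^ 2| = |κ| * β * t ^ 2 := by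
      rw [abs_mul, abs_mul, abs_of_nonneg hβ0, abs_of_nonneg (sq_nonneg t)]
      ring
    have h3 : K₃ * t ^ 4 ≤ K₃ * t ^ 2 := mul_le_mul_of_nonneg_left ht4le2 hK₃0
    rw [hc₃]
    calc |u| ≤ K₃ * t ^ 4 + |κ| * β * t ^ 2 := by rw [h2] at h1; linarith [hu1]
      _ ≤ K₃ * t ^ 2 + |κ| * β * t ^ 2 := by linarith
      _ = (|κ| * β + K₃) * t ^ 2 := by ring
  have hu3 : |u| ≤ 1 / 2 := by
    have h1 : c₃ ≤ D := le_max_right _ _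
    have h2 : c₃ * t ^ 2 ≤ (D + 1) * δa :=
      mul_le_mul (by linarith) ht2δa (sq_nonneg t) (by linarith)
    have h4 : (D + 1) * δa = 1 / 2 := by
      rw [hδa]; field_simp
    linarith [hu2]
  have hu5 : (1:ℝ) / 2 ≤ 1 + u := by
    have h5 : -(1/2 : ℝ) ≤ u := (abs_le.mp hu3).1
    linarith
  have hu4 : (0:ℝ) ≤ 1 + u := by linarith
  -- step 5 : rpow expansion of VK ^ α
  have hrw : ∀ α : ℝ, VK n κ t ^ α = (ω / n) ^ α * t ^ ((n:ℝ) * α) * (1 + u) ^ α := by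
    intro α
    rw [huV]
    rw [show ω * t ^ n / (n:ℝ) * (1 + u) = (ω / n) * t ^ n * (1 + u) from by ring]
    rw [Real.mul_rpow (by positivity) hu4, Real.mul_rpow (by positivity) (by positivity)]
    congr 1
    congr 1
    rw [← Real.rpow_natCast t n, ← Real.rpow_mul htnn]
  have hα₁n : (n:ℝ) * α₁ = (n:ℝ) - 1 := by rw [hα₁]; field_simp
  have hα₂n : (n:ℝ) * α₂ = (n:ℝ) + 1 := by rw [hα₂]; field_simp
  have hγn : (n:ℝ) * γ = (n:ℝ) + 3 := by rw [hγ]; field_simp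
  have ht1r : t ^ ((n:ℝ) - 1) = t ^ m := by rw [← hmr, Real.rpow_natCast]
  have ht2r : t ^ ((n:ℝ) + 1) = t ^ (n + 1) := by
    rw [show ((n:ℝ) + 1) = ((n + 1 : ℕ) : ℝ) from by push_cast; ring, Real.rpow_natCast]
  have ht3r : t ^ ((n:ℝ) + 3) = t ^ (n + 3) := by
    rw [show ((n:ℝ) + 3) = ((n + 3 : ℕ) : ℝ) from by push_cast; ring, Real.rpow_natCast]
  -- coefficient identities
  have hω1n : ω ^ ((1:ℝ)/n) * ω ^ α₁ = ω := by
    rw [← Real.rpow_add hω]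
    rw [show (1:ℝ)/n + α₁ = 1 from by rw [hα₁]; field_simp; ring, Real.rpow_one]
  have hnα₁ne : ((n:ℝ)) ^ α₁ ≠ 0 := ne_of_gt (Real.rpow_pos_of_pos hnr _)
  have hωne : ω ^ ((1:ℝ)/n) ≠ 0 := ne_of_gt (Real.rpow_pos_of_pos hω _)
  have hP : (n:ℝ) ^ α₁ * ω ^ ((1:ℝ)/n) * (ω / n) ^ α₁ = ω := by
    rw [Real.div_rpow hω.le (by positivity : (0:ℝ) ≤ (n:ℝ))]
    calc (n:ℝ) ^ α₁ * ω ^ ((1:ℝ)/n) * (ω ^ α₁ / (n:ℝ) ^ α₁)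
        = (ω ^ ((1:ℝ)/n) * ω ^ α₁) * ((n:ℝ) ^ α₁ / (n:ℝ) ^ α₁) := by ring
      _ = ω := by rw [div_self hnα₁ne, hω1n, mul_one]
  have hQ : (n:ℝ) ^ α₂ / ω ^ ((1:ℝ)/n) * (ω / n) ^ α₂ = ω := by
    rw [Real.div_rpow hω.le (by positivity : (0:ℝ) ≤ (n:ℝ))]
    have hnα₂ne : ((n:ℝ)) ^ α₂ ≠ 0 := ne_of_gt (Real.rpow_pos_of_pos hnr _)
    have hωsub : ω ^ α₂ / ω ^ ((1:ℝ)/n) = ω := by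
      rw [← Real.rpow_sub hω]
      rw [show α₂ - (1:ℝ)/n = 1 from by rw [hα₂]; field_simp; ring, Real.rpow_one]
    calc (n:ℝ) ^ α₂ / ω ^ ((1:ℝ)/n) * (ω ^ α₂ / (n:ℝ) ^ α₂)
        = (ω ^ α₂ / ω ^ ((1:ℝ)/n)) * ((n:ℝ) ^ α₂ / (n:ℝ) ^ α₂) := by ring
      _ = ω := by rw [div_self hnα₂ne, hωsub, mul_one]
  -- expansion of sinK at t itself
  obtain ⟨e, hsinKt⟩ : ∃ e : ℝ, sinK κ t = t * (1 + e) :=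
    ⟨sinK κ t / t - 1, by field_simp; ring⟩
  have he1 : |e + κ * t ^ 2 / 6| ≤ C₁ * t ^ 4 := by
    have heq : e + κ * t ^ 2 / 6 = (sinK κ t - (t - κ * t ^ 3 / 6)) / t := by
      rw [hsinKt]; field_simp; ring
    rw [heq, abs_div, abs_of_pos ht, div_le_iff₀ ht]
    calc |sinK κ t - (t - κ * t ^ 3 / 6)| ≤ C₁ * t ^ 5 := hT t htnn (htδ.trans (min_le_left _ _))
      _ = C₁ * t ^ 4 * t := by ring
  have he2 : |e| ≤ c₂ * t ^ 2 := by
    have h1 : |e| ≤ |e + κ * t ^ 2 / 6| + |κ * t ^ 2 / 6| := by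
      calc |e| = |(e + κ * t ^ 2 / 6) + (-(κ * t ^ 2 / 6))| := by ring_nf
        _ ≤ |e + κ * t ^ 2 / 6| + |(-(κ * t ^ 2 / 6))| := abs_add_le _ _
        _ = |e + κ * t ^ 2 / 6| + |κ * t ^ 2 / 6| := by rw [abs_neg]
    have h2 : |κ * t ^ 2 / 6| = |κ| * t ^ 2 / 6 := by
      rw [abs_div, abs_mul, abs_of_nonneg (sq_nonneg t)]
      norm_num
    have h3 : C₁ * t ^ 4 ≤ C₁ * t ^ 2 := mul_le_mul_of_nonneg_left ht4le2 hC₁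
    rw [hc₂]
    calc |e| ≤ C₁ * t ^ 4 + |κ| * t ^ 2 / 6 := by rw [h2] at h1; linarith [he1]
      _ ≤ C₁ * t ^ 2 + |κ| * t ^ 2 / 6 := by linarith
      _ = (|κ| / 6 + C₁) * t ^ 2 := by ring
  have he3 : |e| ≤ 1 / 2 := by
    have h1 : c₂ ≤ D := le_max_left _ _
    have h2 : c₂ * t ^ 2 ≤ (D + 1) * δa :=
      mul_le_mul (by linarith) ht2δa (sq_nonneg t) (by linarith)
    have h4 : (D + 1) * δa = 1 / 2 := by
      rw [hδa]; field_simp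
    linarith [he2]
  have hnn : (0:ℝ) ≤ 1 + e := by
    have h5 : -(1/2 : ℝ) ≤ e := (abs_le.mp he3).1
    linarith
  have hpowE := hTm e he3
  rw [Real.rpow_natCast] at hpowE
  -- the remainders
  have he2sq : e ^ 2 ≤ c₂ ^ 2 * t ^ 4 := by
    calc e ^ 2 = |e| ^ 2 := (sq_abs e).symm
      _ ≤ (c₂ * t ^ 2) ^ 2 := pow_le_pow_left₀ (abs_nonneg e) he2 2
      _ = c₂ ^ 2 * t ^ 4 := by ring
  have hu2sq : u ^ 2 ≤ c₃ ^ 2 * t ^ 4 := by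
    calc u ^ 2 = |u| ^ 2 := (sq_abs u).symm
      _ ≤ (c₃ * t ^ 2) ^ 2 := pow_le_pow_left₀ (abs_nonneg u) hu2 2
      _ = c₃ ^ 2 * t ^ 4 := by ring
  have hr₁ : |(1 + e) ^ m - 1 - (m:ℝ) * e| ≤ Cm * c₂ ^ 2 * t ^ 4 := by
    refine hpowE.trans ?_
    calc Cm * e ^ 2 ≤ Cm * (c₂ ^ 2 * t ^ 4) := mul_le_mul_of_nonneg_left he2sq hCm
      _ = Cm * c₂ ^ 2 * t ^ 4 := by ring
  have hr₂ : |(1 + u) ^ α₁ - 1 - α₁ * u| ≤ C₂ * c₃ ^ 2 * t ^ 4 := by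
    refine (hT₂ u hu3).trans ?_
    calc C₂ * u ^ 2 ≤ C₂ * (c₃ ^ 2 * t ^ 4) := mul_le_mul_of_nonneg_left hu2sq hC₂
      _ = C₂ * c₃ ^ 2 * t ^ 4 := by ring
  have hsb : |(1 + u) ^ α₂ - 1| ≤ (|α₂| * c₃ + C₃ * c₃ ^ 2) * t ^ 2 := by
    have h1 : |(1 + u) ^ α₂ - 1| ≤ |(1 + u) ^ α₂ - 1 - α₂ * u| + |α₂ * u| := by
      calc |(1 + u) ^ α₂ - 1| = |((1 + u) ^ α₂ - 1 - α₂ * u) + α₂ * u| := by ring_nf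
        _ ≤ |(1 + u) ^ α₂ - 1 - α₂ * u| + |α₂ * u| := abs_add_le _ _
    have h2 : |α₂ * u| ≤ |α₂| * (c₃ * t ^ 2) := by
      rw [abs_mul]
      exact mul_le_mul_of_nonneg_left hu2 (abs_nonneg _)
    have h3 : |(1 + u) ^ α₂ - 1 - α₂ * u| ≤ C₃ * c₃ ^ 2 * t ^ 4 := by
      refine (hT₃ u hu3).trans ?_
      calc C₃ * u ^ 2 ≤ C₃ * (c₃ ^ 2 * t ^ 4) := mul_le_mul_of_nonneg_left hu2sq hC₃
        _ = C₃ * c₃ ^ 2 * t ^ 4 := by ring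
    have h4 : C₃ * c₃ ^ 2 * t ^ 4 ≤ C₃ * c₃ ^ 2 * t ^ 2 :=
      mul_le_mul_of_nonneg_left ht4le2 (by positivity)
    calc |(1 + u) ^ α₂ - 1| ≤ C₃ * c₃ ^ 2 * t ^ 2 + |α₂| * (c₃ * t ^ 2) := by
          linarith [h1, h2, h3]
      _ = (|α₂| * c₃ + C₃ * c₃ ^ 2) * t ^ 2 := by ring
  -- the structural identity
  have hqid : (m:ℝ) * κ / 6 - α₁ * β * κ = q := by
    rw [hmr, hα₁, hβ, hq]
    field_simp
    ring
  have hAK : AK n κ t = ω * (t ^ m * (1 + e) ^ m) := by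
    rw [hωdef, hmdef]
    unfold AK
    rw [hsinKt, mul_pow]
  have hGoalEq : AK n κ t - ((n:ℝ) ^ α₁ * ω ^ ((1:ℝ)/(n:ℝ)) * VK n κ t ^ α₁ -
      q * ((n:ℝ) ^ α₂ / ω ^ ((1:ℝ)/(n:ℝ))) * VK n κ t ^ α₂)
      = ω * t ^ m * ((1 + e) ^ m - (1 + u) ^ α₁ + q * t ^ 2 * (1 + u) ^ α₂) := by
    rw [hAK, hrw α₁, hrw α₂, hα₁n, hα₂n, ht1r, ht2r]
    have htpow : t ^ (n + 1) = t ^ m * t ^ 2 := by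
      rw [← pow_add]
      congr 1
      omega
    rw [htpow]
    linear_combination (-(t ^ m * (1 + u) ^ α₁)) * hP + (q * (t ^ m * t ^ 2) * (1 + u) ^ α₂) * hQ
  have hB : (1 + e) ^ m - (1 + u) ^ α₁ + q * t ^ 2 * (1 + u) ^ α₂
      = (m:ℝ) * (e + κ * t ^ 2 / 6) - α₁ * (u + β * κ * t ^ 2)
        + ((1 + e) ^ m - 1 - (m:ℝ) * e) - ((1 + u) ^ α₁ - 1 - α₁ * u)
        + q * t ^ 2 * ((1 + u) ^ α₂ - 1) := by
    linear_combination (-(t ^ 2)) * hqid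
  have hBbound : |(1 + e) ^ m - (1 + u) ^ α₁ + q * t ^ 2 * (1 + u) ^ α₂| ≤ K₄ * t ^ 4 := by
    rw [hB]
    have t1 : |(m:ℝ) * (e + κ * t ^ 2 / 6)| ≤ (m:ℝ) * C₁ * t ^ 4 := by
      rw [abs_mul, abs_of_nonneg (by positivity : (0:ℝ) ≤ (m:ℝ))]
      calc (m:ℝ) * |e + κ * t ^ 2 / 6| ≤ (m:ℝ) * (C₁ * t ^ 4) :=
            mul_le_mul_of_nonneg_left he1 (by positivity)
        _ = (m:ℝ) * C₁ * t ^ 4 := by ring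
    have t2 : |α₁ * (u + β * κ * t ^ 2)| ≤ |α₁| * K₃ * t ^ 4 := by
      rw [abs_mul]
      calc |α₁| * |u + β * κ * t ^ 2| ≤ |α₁| * (K₃ * t ^ 4) :=
            mul_le_mul_of_nonneg_left hu1 (abs_nonneg _)
        _ = |α₁| * K₃ * t ^ 4 := by ring
    have t5 : |q * t ^ 2 * ((1 + u) ^ α₂ - 1)| ≤ |q| * (|α₂| * c₃ + C₃ * c₃ ^ 2) * t ^ 4 := by
      rw [abs_mul, abs_mul, abs_of_nonneg (sq_nonneg t)]
      calc |q| * t ^ 2 * |(1 + u) ^ α₂ - 1|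
          ≤ |q| * t ^ 2 * ((|α₂| * c₃ + C₃ * c₃ ^ 2) * t ^ 2) :=
            mul_le_mul_of_nonneg_left hsb (by positivity)
        _ = |q| * (|α₂| * c₃ + C₃ * c₃ ^ 2) * t ^ 4 := by ring
    have htri : |(m:ℝ) * (e + κ * t ^ 2 / 6) - α₁ * (u + β * κ * t ^ 2)
        + ((1 + e) ^ m - 1 - (m:ℝ) * e) - ((1 + u) ^ α₁ - 1 - α₁ * u)
        + q * t ^ 2 * ((1 + u) ^ α₂ - 1)|
        ≤ |(m:ℝ) * (e + κ * t ^ 2 / 6)| + |α₁ * (u + β * κ * t ^ 2)|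
          + |(1 + e) ^ m - 1 - (m:ℝ) * e| + |(1 + u) ^ α₁ - 1 - α₁ * u|
          + |q * t ^ 2 * ((1 + u) ^ α₂ - 1)| := by
      have a1 := abs_add_le ((m:ℝ) * (e + κ * t ^ 2 / 6) - α₁ * (u + β * κ * t ^ 2)
          + ((1 + e) ^ m - 1 - (m:ℝ) * e) - ((1 + u) ^ α₁ - 1 - α₁ * u))
          (q * t ^ 2 * ((1 + u) ^ α₂ - 1))
      have a2 := abs_sub ((m:ℝ) * (e + κ * t ^ 2 / 6) - α₁ * (u + β * κ * t ^ 2)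
          + ((1 + e) ^ m - 1 - (m:ℝ) * e)) ((1 + u) ^ α₁ - 1 - α₁ * u)
      have a3 := abs_add_le ((m:ℝ) * (e + κ * t ^ 2 / 6) - α₁ * (u + β * κ * t ^ 2))
          ((1 + e) ^ m - 1 - (m:ℝ) * e)
      have a4 := abs_sub ((m:ℝ) * (e + κ * t ^ 2 / 6)) (α₁ * (u + β * κ * t ^ 2))
      linarith
    rw [hK₄]
    calc |(m:ℝ) * (e + κ * t ^ 2 / 6) - α₁ * (u + β * κ * t ^ 2)
        + ((1 + e) ^ m - 1 - (m:ℝ) * e) - ((1 + u) ^ α₁ - 1 - α₁ * u)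
        + q * t ^ 2 * ((1 + u) ^ α₂ - 1)|
        ≤ |(m:ℝ) * (e + κ * t ^ 2 / 6)| + |α₁ * (u + β * κ * t ^ 2)|
          + |(1 + e) ^ m - 1 - (m:ℝ) * e| + |(1 + u) ^ α₁ - 1 - α₁ * u|
          + |q * t ^ 2 * ((1 + u) ^ α₂ - 1)| := htri
      _ ≤ (m:ℝ) * C₁ * t ^ 4 + |α₁| * K₃ * t ^ 4 + Cm * c₂ ^ 2 * t ^ 4 + C₂ * c₃ ^ 2 * t ^ 4
          + |q| * (|α₂| * c₃ + C₃ * c₃ ^ 2) * t ^ 4 :=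
          add_le_add (add_le_add (add_le_add (add_le_add t1 t2) hr₁) hr₂) t5
      _ = ((m:ℝ) * C₁ + |α₁| * K₃ + Cm * c₂ ^ 2 + C₂ * c₃ ^ 2
          + |q| * (|α₂| * c₃ + C₃ * c₃ ^ 2)) * t ^ 4 := by ring
  -- lower bound for VK and conclusion
  have hVlow : ω / (2 * (n:ℝ)) * t ^ n ≤ VK n κ t := by
    rw [huV]
    calc ω / (2 * (n:ℝ)) * t ^ n = ω * t ^ n / n * (1/2) := by field_simp
      _ ≤ ω * t ^ n / n * (1 + u) := mul_le_mul_of_nonneg_left hu5 (by positivity)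
  have hVγ : (ω / (2 * (n:ℝ))) ^ γ * t ^ (n + 3) ≤ VK n κ t ^ γ := by
    have h1 : ((ω / (2 * (n:ℝ))) * t ^ n) ^ γ ≤ VK n κ t ^ γ :=
      Real.rpow_le_rpow (by positivity) hVlow hγ0
    rw [Real.mul_rpow hbase.le (by positivity), ← Real.rpow_natCast t n,
      ← Real.rpow_mul htnn, hγn, ht3r] at h1
    exact h1
  have hmain : |AK n κ t - ((n:ℝ) ^ α₁ * ω ^ ((1:ℝ)/(n:ℝ)) * VK n κ t ^ α₁ -
      q * ((n:ℝ) ^ α₂ / ω ^ ((1:ℝ)/(n:ℝ))) * VK n κ t ^ α₂)| ≤ ω * K₄ * t ^ (n + 3) := by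
    rw [hGoalEq, abs_mul, abs_of_nonneg (by positivity : (0:ℝ) ≤ ω * t ^ m)]
    calc ω * t ^ m * |(1 + e) ^ m - (1 + u) ^ α₁ + q * t ^ 2 * (1 + u) ^ α₂|
        ≤ ω * t ^ m * (K₄ * t ^ 4) := mul_le_mul_of_nonneg_left hBbound (by positivity)
      _ = ω * K₄ * (t ^ m * t ^ 4) := by ring
      _ = ω * K₄ * t ^ (n + 3) := by
          rw [← pow_add]
          congr 2
          omega
  refine hmain.trans ?_
  calc ω * K₄ * t ^ (n + 3) = (ω * K₄ / (ω / (2 * (n:ℝ))) ^ γ) * ((ω / (2 * (n:ℝ))) ^ γ * t ^ (n + 3)) := by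
        field_simp
      _ ≤ (ω * K₄ / (ω / (2 * (n:ℝ))) ^ γ) * VK n κ t ^ γ :=
        mul_le_mul_of_nonneg_left hVγ (by positivity)

end IsoPf

/-- Taylor expansion of the model isoperimetric profile as `v → 0⁺`:
`I_κ(v) = n^{(n-1)/n}·ω_{n-1}^{1/n}·v^{(n-1)/n}
  - ((n-1)κ/(2(n+2)))·(n^{(n+1)/n}/ω_{n-1}^{1/n})·v^{(n+1)/n} + O(v^{(n+3)/n})`. -/
theorem isoperimetric_profile_asymptotics (n : ℕ) (hn : 2 ≤ n) (κ : ℝ) :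
    (fun v : ℝ =>
        IK n κ v -
          ((n : ℝ) ^ (((n : ℝ) - 1) / (n : ℝ)) * omegaS n ^ ((1 : ℝ) / (n : ℝ)) *
              v ^ (((n : ℝ) - 1) / (n : ℝ)) -
            (((n : ℝ) - 1) * κ / (2 * ((n : ℝ) + 2))) *
              ((n : ℝ) ^ (((n : ℝ) + 1) / (n : ℝ)) / omegaS n ^ ((1 : ℝ) / (n : ℝ))) *
              v ^ (((n : ℝ) + 1) / (n : ℝ))))
      =O[nhdsWithin 0 (Set.Ioi 0)] fun v : ℝ => v ^ (((n : ℝ) + 3) / (n : ℝ)) := by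
  obtain ⟨C, δ, hC0, hδ0, hδ1, hδπ, hbound⟩ := IsoPf.core_estimate n hn κ
  have hδdom : δ ∈ domK κ := IsoPf.mem_domK.mpr ⟨hδ0.le, fun h => hδπ h⟩
  have hv₀pos : 0 < VK n κ δ := by
    have h0 : (0:ℝ) ∈ domK κ := IsoPf.mem_domK.mpr ⟨le_refl 0, fun h =>
      div_pos Real.pi_pos (Real.sqrt_pos.mpr h)⟩
    have h1 := (IsoPf.strictMonoOn_VK (by omega : 1 ≤ n) κ) h0 hδdom hδ0
    rwa [IsoPf.VK_zero] at h1
  rw [isBigO_iff]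
  refine ⟨C, ?_⟩
  filter_upwards [Ioo_mem_nhdsGT_of_mem (Set.left_mem_Ico.mpr hv₀pos)] with v hv
  have hIVT : ∃ t ∈ Set.Ioo (0:ℝ) δ, VK n κ t = v := by
    have hcont : ContinuousOn (VK n κ) (Set.Icc 0 δ) := (IsoPf.continuous_VK n κ).continuousOn
    have hsub := intermediate_value_Ioo hδ0.le hcont
    have hmem : v ∈ Set.Ioo (VK n κ 0) (VK n κ δ) := by
      rw [IsoPf.VK_zero]; exact ⟨hv.1, hv.2⟩
    exact hsub hmem
  obtain ⟨t, htmem, htv⟩ := hIVT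
  have htdom : t ∈ domK κ := IsoPf.mem_domK.mpr
    ⟨htmem.1.le, fun h => lt_trans htmem.2 (hδπ h)⟩
  have hVKinv : VKinv n κ v = t := IsoPf.VKinv_eq (by omega : 1 ≤ n) htdom htv
  have hIK : IK n κ v = AK n κ t := by unfold IK; rw [hVKinv]
  have hb := hbound t htmem.1 htmem.2.le
  rw [htv] at hb
  rw [Real.norm_eq_abs, Real.norm_eq_abs, hIK]
  have habs : |v ^ (((n:ℝ) + 3) / (n:ℝ))| = v ^ (((n:ℝ) + 3) / (n:ℝ)) :=
    abs_of_nonneg (Real.rpow_nonneg hv.1.le _)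
  rw [habs]
  exact hb
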